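/- Let β ∈ ℝ, b > 0, and let ℓ₀ ≥ 2 be an integer. Then there exist finite constants C₁, C₂ ≥ 0, depending only on β, b and ℓ₀, with the following property: for every c ∈ ℂ, every finite family y_1, …, y_N ∈ ℂ with |y_i| > b for all i, and all x, w ∈ ℂ with |x| < b, |w| < b and x ≠ w, the compensated potential sum Ψ̃(u) := Σ_{i=1}^N (−β·log|u − y_i|) + Re[u·conj(c)] satisfies |Ψ̃(x) − Ψ̃(w)| / |x − w| ≤ |β·Σ_{i=1}^N y_i^{−1} + conj(c)| + C₁·Σ_{ℓ=2}^{ℓ₀−1} |β·Σ_{i=1}^N y_i^{−ℓ}| + C₂·Σ_{i=1}^N b^{ℓ₀} / (|y_i|^{ℓ₀} − b^{ℓ₀}). -/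

import Mathlib

open Finset in
lemma geom_inv_expand (m : ℕ) (u y : ℂ) (hy : y ≠ 0) (hyu : y - u ≠ 0) :
    (y - u)⁻¹ = (∑ ℓ ∈ Finset.range m, u ^ ℓ * (y⁻¹) ^ (ℓ + 1))
      + u ^ m * (y⁻¹) ^ m * (y - u)⁻¹ := by
  induction m with
  | zero => simp
  | succ n ih =>
    conv_lhs => rw [ih]
    rw [Finset.sum_range_succ]
    have h : u ^ n * (y⁻¹) ^ n * (y - u)⁻¹
        = u ^ n * (y⁻¹) ^ (n + 1) + u ^ (n + 1) * (y⁻¹) ^ (n + 1) * (y - u)⁻¹ := by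
      linear_combination (-(u ^ n * (y⁻¹) ^ n * (y - u)⁻¹)) * mul_inv_cancel₀ hy
        + (u ^ n * (y⁻¹) ^ n * y⁻¹) * mul_inv_cancel₀ hyu
    rw [h]; ring

lemma tail_bound (b Y : ℝ) (hb : 0 < b) (hY : b < Y) (ℓ₀ : ℕ) (hℓ₀ : 2 ≤ ℓ₀) :
    b ^ (ℓ₀ - 1) / (Y ^ (ℓ₀ - 1) * (Y - b)) ≤ (ℓ₀ / b) * (b ^ ℓ₀ / (Y ^ ℓ₀ - b ^ ℓ₀)) := by
  have hYpos : 0 < Y := hb.trans hY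
  have hYb : 0 < Y - b := by linarith
  have hden : 0 < Y ^ ℓ₀ - b ^ ℓ₀ := by
    have := pow_lt_pow_left₀ hY hb.le (by omega : ℓ₀ ≠ 0)
    linarith
  have key : Y ^ ℓ₀ - b ^ ℓ₀ ≤ ℓ₀ * (Y ^ (ℓ₀ - 1) * (Y - b)) := by
    have h1 : (∑ i ∈ Finset.range ℓ₀, Y ^ i * b ^ (ℓ₀ - 1 - i)) * (Y - b) = Y ^ ℓ₀ - b ^ ℓ₀ :=
      geom_sum₂_mul Y b ℓ₀
    have h2 : (∑ i ∈ Finset.range ℓ₀, Y ^ i * b ^ (ℓ₀ - 1 - i)) ≤ ℓ₀ * Y ^ (ℓ₀ - 1) := by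
      calc (∑ i ∈ Finset.range ℓ₀, Y ^ i * b ^ (ℓ₀ - 1 - i))
          ≤ ∑ i ∈ Finset.range ℓ₀, Y ^ (ℓ₀ - 1) := by
            apply Finset.sum_le_sum
            intro i hi
            simp only [Finset.mem_range] at hi
            calc Y ^ i * b ^ (ℓ₀ - 1 - i) ≤ Y ^ i * Y ^ (ℓ₀ - 1 - i) := by
                  apply mul_le_mul_of_nonneg_left (pow_le_pow_left₀ hb.le hY.le _) (by positivity)
              _ = Y ^ (ℓ₀ - 1) := by
                  rw [← pow_add]; congr 1; omega
        _ = ℓ₀ * Y ^ (ℓ₀ - 1) := by rw [Finset.sum_const, Finset.card_range]; ring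
    calc Y ^ ℓ₀ - b ^ ℓ₀ = (∑ i ∈ Finset.range ℓ₀, Y ^ i * b ^ (ℓ₀ - 1 - i)) * (Y - b) := h1.symm
      _ ≤ (ℓ₀ * Y ^ (ℓ₀ - 1)) * (Y - b) := by
          apply mul_le_mul_of_nonneg_right h2 hYb.le
      _ = ℓ₀ * (Y ^ (ℓ₀ - 1) * (Y - b)) := by ring
  have hbl : b ^ ℓ₀ = b * b ^ (ℓ₀ - 1) := by
    rw [← pow_succ']; congr 1; omega
  have hrhs : (ℓ₀ / b) * (b ^ ℓ₀ / (Y ^ ℓ₀ - b ^ ℓ₀)) = (ℓ₀ * b ^ ℓ₀) / (b * (Y ^ ℓ₀ - b ^ ℓ₀)) :=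
    div_mul_div_comm _ _ _ _
  rw [hrhs, div_le_div_iff₀ (by positivity) (by positivity)]
  calc b ^ (ℓ₀ - 1) * (b * (Y ^ ℓ₀ - b ^ ℓ₀)) = b ^ ℓ₀ * (Y ^ ℓ₀ - b ^ ℓ₀) := by rw [hbl]; ring
    _ ≤ b ^ ℓ₀ * (ℓ₀ * (Y ^ (ℓ₀ - 1) * (Y - b))) := by
        apply mul_le_mul_of_nonneg_left key (by positivity)
    _ = ℓ₀ * b ^ ℓ₀ * (Y ^ (ℓ₀ - 1) * (Y - b)) := by ring

open Finset in
lemma pointwise_bound (β b : ℝ) (hb : 0 < b) (ℓ₀ : ℕ) (hℓ₀ : 2 ≤ ℓ₀) (c : ℂ)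
    (N : ℕ) (y : Fin N → ℂ) (hy : ∀ i, b < ‖y i‖) (u : ℂ)
    (hu : ‖u‖ < b) :
    ‖(starRingEnd ℂ) c + (β : ℂ) * ∑ i, (y i - u)⁻¹‖
      ≤ ‖(β : ℂ) * ∑ i, (y i)⁻¹ + (starRingEnd ℂ) c‖
        + (max 1 b) ^ ℓ₀ * ∑ ℓ ∈ Finset.Ico 2 ℓ₀,
            ‖(β : ℂ) * ∑ i, ((y i)⁻¹) ^ ℓ‖
        + (|β| * ℓ₀ / b) * ∑ i, b ^ ℓ₀ / (‖y i‖ ^ ℓ₀ - b ^ ℓ₀) := by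
  set m := ℓ₀ - 1 with hm
  have hu0 : 0 ≤ ‖u‖ := norm_nonneg u
  have hy0 : ∀ i, y i ≠ 0 := by
    intro i h
    have h2 := hy i; rw [h] at h2; simp at h2; linarith
  have hyu : ∀ i, y i - u ≠ 0 := by
    intro i h
    rw [sub_eq_zero] at h
    have h2 := hy i; rw [h] at h2; linarith
  set S : ℕ → ℂ := fun ℓ => (β : ℂ) * ∑ i, ((y i)⁻¹) ^ ℓ with hS
  set M : ℂ := ∑ ℓ ∈ Finset.Ico 2 ℓ₀, u ^ (ℓ - 1) * S ℓ with hM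
  set T : ℂ := (β : ℂ) * ∑ i, u ^ m * ((y i)⁻¹) ^ m * (y i - u)⁻¹ with hT
  obtain ⟨k, hk⟩ : ∃ k, m = k + 1 := ⟨m - 1, by omega⟩
  have mid : M = ∑ j ∈ Finset.range k, u ^ (j + 1) * S (j + 2) := by
    rw [hM, Finset.sum_Ico_eq_sum_range]
    refine Finset.sum_congr (by congr 1; omega) fun j hj => ?_
    congr 2 <;> omega
  have main : (starRingEnd ℂ) c + (β : ℂ) * ∑ i, (y i - u)⁻¹
      = ((β : ℂ) * ∑ i, (y i)⁻¹ + (starRingEnd ℂ) c) + M + T := by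
    have h1 : ∑ i, (y i - u)⁻¹
        = ∑ i, ((∑ ℓ ∈ Finset.range m, u ^ ℓ * ((y i)⁻¹) ^ (ℓ + 1))
            + u ^ m * ((y i)⁻¹) ^ m * (y i - u)⁻¹) :=
      Finset.sum_congr rfl fun i _ => geom_inv_expand m u (y i) (hy0 i) (hyu i)
    rw [h1, Finset.sum_add_distrib, mul_add]
    rw [Finset.sum_comm]
    have h2 : ∀ ℓ, (∑ i, u ^ ℓ * ((y i)⁻¹) ^ (ℓ + 1))
        = u ^ ℓ * ∑ i, ((y i)⁻¹) ^ (ℓ + 1) := fun ℓ => by rw [Finset.mul_sum]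
    simp only [h2]
    rw [Finset.mul_sum, mid]
    rw [hk, Finset.sum_range_succ']
    have h3 : ∀ j, (β : ℂ) * (u ^ (j + 1) * ∑ i, ((y i)⁻¹) ^ (j + 1 + 1))
        = u ^ (j + 1) * S (j + 2) := fun j => by rw [hS]; ring
    simp only [h3]
    have h4 : (β : ℂ) * (u ^ 0 * ∑ i, ((y i)⁻¹) ^ (0 + 1)) = (β : ℂ) * ∑ i, (y i)⁻¹ := by
      simp
    rw [h4, hT, hk]
    ring
  rw [main]
  have tri : ‖((β : ℂ) * ∑ i, (y i)⁻¹ + (starRingEnd ℂ) c) + M + T‖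
      ≤ ‖(β : ℂ) * ∑ i, (y i)⁻¹ + (starRingEnd ℂ) c‖
        + ‖M‖ + ‖T‖ :=
    le_trans (norm_add_le _ _) (by gcongr; exact norm_add_le _ _)
  refine le_trans tri ?_
  gcongr
  · rw [hM]
    refine le_trans (norm_sum_le _ _) ?_
    rw [Finset.mul_sum]
    refine Finset.sum_le_sum fun ℓ hℓ => ?_
    rw [norm_mul, norm_pow]
    have h5 : ‖u‖ ^ (ℓ - 1) ≤ (max 1 b) ^ ℓ₀ := by
      calc ‖u‖ ^ (ℓ - 1) ≤ (max 1 b) ^ (ℓ - 1) := by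
            apply pow_le_pow_left₀ hu0
            exact le_trans hu.le (le_max_right 1 b)
        _ ≤ (max 1 b) ^ ℓ₀ := by
            apply pow_le_pow_right₀ (le_max_left 1 b)
            simp only [Finset.mem_Ico] at hℓ
            omega
    exact mul_le_mul_of_nonneg_right h5 (norm_nonneg _)
  · rw [hT, norm_mul, Complex.norm_real, Real.norm_eq_abs]
    refine le_trans (mul_le_mul_of_nonneg_left (norm_sum_le _ _) (abs_nonneg β)) ?_
    have hC : |β| * ℓ₀ / b * ∑ i, b ^ ℓ₀ / (‖y i‖ ^ ℓ₀ - b ^ ℓ₀)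
        = |β| * ∑ i, (ℓ₀ / b) * (b ^ ℓ₀ / (‖y i‖ ^ ℓ₀ - b ^ ℓ₀)) := by
      rw [Finset.mul_sum, Finset.mul_sum]
      refine Finset.sum_congr rfl fun i _ => ?_
      ring
    rw [hC]
    refine mul_le_mul_of_nonneg_left (Finset.sum_le_sum fun i _ => ?_) (abs_nonneg β)
    have hYb : 0 < ‖y i‖ - b := by linarith [hy i]
    have hYpos : 0 < ‖y i‖ := lt_trans hb (hy i)
    have h6 : (‖y i - u‖)⁻¹ ≤ (‖y i‖ - b)⁻¹ := by
      apply inv_anti₀ hYb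
      have h7 : ‖y i‖ - ‖u‖ ≤ ‖y i - u‖ := by
        simpa using norm_sub_norm_le (y i) u
      linarith
    have hsub : ‖u‖ ^ m * ((‖y i‖)⁻¹) ^ m * (‖y i - u‖)⁻¹
        ≤ b ^ m * ((‖y i‖)⁻¹) ^ m * (‖y i‖ - b)⁻¹ := by
      have hpart : ‖u‖ ^ m * ((‖y i‖)⁻¹) ^ m
          ≤ b ^ m * ((‖y i‖)⁻¹) ^ m :=
        mul_le_mul_of_nonneg_right (pow_le_pow_left₀ hu0 hu.le m) (by positivity)
      exact mul_le_mul hpart h6 (by positivity) (by positivity)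
    calc ‖u ^ m * ((y i)⁻¹) ^ m * (y i - u)⁻¹‖
        = ‖u‖ ^ m * ((‖y i‖)⁻¹) ^ m * (‖y i - u‖)⁻¹ := by
          simp [norm_mul, norm_pow, norm_inv]
      _ ≤ b ^ m * ((‖y i‖)⁻¹) ^ m * (‖y i‖ - b)⁻¹ := hsub
      _ = b ^ m / (‖y i‖ ^ m * (‖y i‖ - b)) := by
          rw [inv_pow]
          field_simp
      _ ≤ (ℓ₀ / b) * (b ^ ℓ₀ / (‖y i‖ ^ ℓ₀ - b ^ ℓ₀)) := by
          have h9 := tail_bound b (‖y i‖) hb (hy i) ℓ₀ hℓ₀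
          rwa [hm]

lemma hasDerivAt_log_abs (w v yi : ℂ) (t : ℝ) (hz : w + (t : ℂ) * v - yi ≠ 0) :
    HasDerivAt (fun s : ℝ => Real.log (‖w + (s : ℂ) * v - yi‖))
      ((v * (w + (t : ℂ) * v - yi)⁻¹).re) t := by
  have hz' : HasDerivAt (fun s : ℝ => w + (s : ℂ) * v - yi) v t := by
    have h1 : HasDerivAt (fun s : ℝ => (s : ℂ)) 1 t := by
      simpa using (hasDerivAt_id t).ofReal_comp
    simpa using ((h1.mul_const v).const_add w).sub_const yi
  have hre : HasDerivAt (fun s : ℝ => (w + (s : ℂ) * v - yi).re) v.re t := by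
    have := Complex.reCLM.hasFDerivAt.comp_hasDerivAt t hz'
    simpa [Function.comp_def] using this
  have him : HasDerivAt (fun s : ℝ => (w + (s : ℂ) * v - yi).im) v.im t := by
    have := Complex.imCLM.hasFDerivAt.comp_hasDerivAt t hz'
    simpa [Function.comp_def] using this
  have hq : HasDerivAt (fun s : ℝ => Complex.normSq (w + (s : ℂ) * v - yi))
      (2 * ((w + (t : ℂ) * v - yi).re * v.re + (w + (t : ℂ) * v - yi).im * v.im)) t := by
    have h2 := (hre.mul hre).add (him.mul him)
    have h3 : (fun s : ℝ => Complex.normSq (w + (s : ℂ) * v - yi))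
        = fun s : ℝ => (w + (s : ℂ) * v - yi).re * (w + (s : ℂ) * v - yi).re
            + (w + (s : ℂ) * v - yi).im * (w + (s : ℂ) * v - yi).im := by
      funext s; rw [Complex.normSq_apply]
    rw [h3]
    exact h2.congr_deriv (by ring)
  have hq0 : Complex.normSq (w + (t : ℂ) * v - yi) ≠ 0 :=
    (Complex.normSq_pos.mpr hz).ne'
  have hlog := (Real.hasDerivAt_log hq0).comp t hq
  have h4 : (fun s : ℝ => Real.log (‖w + (s : ℂ) * v - yi‖))
      = fun s : ℝ => Real.log (Complex.normSq (w + (s : ℂ) * v - yi)) / 2 := by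
    funext s
    rw [← Complex.sq_norm, Real.log_pow]
    push_cast; ring
  rw [h4]
  have h5 := hlog.div_const 2
  refine h5.congr_deriv ?_
  symm
  rw [Complex.inv_def]
  simp only [Complex.mul_re, Complex.mul_im, Complex.conj_re, Complex.conj_im,
    Complex.ofReal_re, Complex.ofReal_im, Function.comp]
  field_simp
  ring


/-- Uniform Lipschitz (difference-quotient) estimate for the compensated
logarithmic interaction: there exist constants `C₁, C₂ ≥ 0` (depending only on
`β, b, ℓ₀`) such that for every compensation constant `c`, every finite family
of exterior points `y_i` with `|y_i| > b`, and all `x ≠ w` in the disc of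
radius `b`, the compensated potential
`Ψ̃(u) = Σ_i (-β log|u - y_i|) + Re[u·conj(c)]` satisfies
`|Ψ̃(x) - Ψ̃(w)|/|x - w| ≤ |β Σ_i y_i⁻¹ + conj c| + C₁ Σ_{ℓ=2}^{ℓ₀-1} |β Σ_i y_i^{-ℓ}|
  + C₂ Σ_i b^{ℓ₀}/(|y_i|^{ℓ₀} - b^{ℓ₀})`. -/
theorem compensated_log_potential_lipschitz_estimate
    (β b : ℝ) (hb : 0 < b) (ℓ₀ : ℕ) (hℓ₀ : 2 ≤ ℓ₀) :
    ∃ C₁ C₂ : ℝ, 0 ≤ C₁ ∧ 0 ≤ C₂ ∧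
      ∀ (c : ℂ) (N : ℕ) (y : Fin N → ℂ), (∀ i, b < ‖y i‖) →
        ∀ x w : ℂ, ‖x‖ < b → ‖w‖ < b → x ≠ w →
          |((∑ i, (-β * Real.log (‖x - y i‖)))
              + (x * (starRingEnd ℂ) c).re)
            - ((∑ i, (-β * Real.log (‖w - y i‖)))
              + (w * (starRingEnd ℂ) c).re)| / ‖x - w‖
          ≤ ‖(β : ℂ) * ∑ i, (y i)⁻¹ + (starRingEnd ℂ) c‖
            + C₁ * ∑ ℓ ∈ Finset.Ico 2 ℓ₀,
                ‖(β : ℂ) * ∑ i, ((y i)⁻¹) ^ ℓ‖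
            + C₂ * ∑ i, b ^ ℓ₀ / (‖y i‖ ^ ℓ₀ - b ^ ℓ₀) := by
  refine ⟨(max 1 b) ^ ℓ₀, |β| * ℓ₀ / b, by positivity, by positivity, ?_⟩
  intro c N y hy x w hx hw hxw
  set v : ℂ := x - w with hv
  have hv0 : v ≠ 0 := sub_ne_zero.mpr hxw
  have habsv : 0 < ‖v‖ := norm_pos_iff.mpr hv0
  have hut : ∀ t : ℝ, t ∈ Set.Icc (0:ℝ) 1 → ‖w + (t:ℂ) * v‖ < b := by
    intro t ht
    have h8 : w + (t:ℂ) * v = ((1 - t : ℝ) : ℂ) * w + ((t : ℝ) : ℂ) * x := by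
      rw [hv]; push_cast; ring
    rw [h8]
    calc ‖((1 - t : ℝ) : ℂ) * w + ((t : ℝ) : ℂ) * x‖
        ≤ ‖((1 - t : ℝ) : ℂ) * w‖ + ‖((t : ℝ) : ℂ) * x‖ :=
          norm_add_le _ _
      _ = (1 - t) * ‖w‖ + t * ‖x‖ := by
          rw [norm_mul, norm_mul, Complex.norm_real, Complex.norm_real, Real.norm_eq_abs, Real.norm_eq_abs,
            abs_of_nonneg (by linarith [ht.2]), abs_of_nonneg ht.1]
      _ < b := by
          rcases eq_or_lt_of_le ht.2 with h | h
          · rw [← h]; nlinarith [norm_nonneg w, norm_nonneg x]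
          · nlinarith [norm_nonneg w, norm_nonneg x, ht.1,
              mul_pos (by linarith : (0:ℝ) < 1 - t) (by linarith : 0 < b - ‖w‖),
              mul_nonneg ht.1 (by linarith : (0:ℝ) ≤ b - ‖x‖)]
  have hz : ∀ t : ℝ, t ∈ Set.Icc (0:ℝ) 1 → ∀ i, w + (t:ℂ) * v - y i ≠ 0 := by
    intro t ht i h
    rw [sub_eq_zero] at h
    have h1 := hut t ht
    rw [h] at h1
    linarith [hy i]
  set B : ℝ := ‖(β : ℂ) * ∑ i, (y i)⁻¹ + (starRingEnd ℂ) c‖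
      + (max 1 b) ^ ℓ₀ * ∑ ℓ ∈ Finset.Ico 2 ℓ₀,
          ‖(β : ℂ) * ∑ i, ((y i)⁻¹) ^ ℓ‖
      + (|β| * ℓ₀ / b) * ∑ i, b ^ ℓ₀ / (‖y i‖ ^ ℓ₀ - b ^ ℓ₀) with hB
  set f : ℝ → ℝ := fun t => (∑ i, (-β * Real.log (‖w + (t:ℂ) * v - y i‖)))
      + ((w + (t:ℂ) * v) * (starRingEnd ℂ) c).re with hf
  set F : ℝ → ℝ := fun t =>
      (v * ((starRingEnd ℂ) c + (β:ℂ) * ∑ i, (y i - (w + (t:ℂ) * v))⁻¹)).re with hF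
  have hderiv : ∀ t ∈ Set.Icc (0:ℝ) 1, HasDerivAt f (F t) t := by
    intro t ht
    have hsum : HasDerivAt (fun s : ℝ => ∑ i, (-β * Real.log (‖w + (s:ℂ) * v - y i‖)))
        (∑ i, (-β * (v * (w + (t:ℂ) * v - y i)⁻¹).re)) t :=
      HasDerivAt.fun_sum fun i _ => (hasDerivAt_log_abs w v (y i) t (hz t ht i)).const_mul (-β)
    have hlin : HasDerivAt (fun s : ℝ => ((w + (s:ℂ) * v) * (starRingEnd ℂ) c).re)
        ((v * (starRingEnd ℂ) c).re) t := by
      have h1 : HasDerivAt (fun s : ℝ => (s : ℂ)) 1 t := by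
        simpa using (hasDerivAt_id t).ofReal_comp
      have h2 : HasDerivAt (fun s : ℝ => (w + (s:ℂ) * v) * (starRingEnd ℂ) c)
          (v * (starRingEnd ℂ) c) t := by
        simpa using ((h1.mul_const v).const_add w).mul_const ((starRingEnd ℂ) c)
      have := Complex.reCLM.hasFDerivAt.comp_hasDerivAt t h2
      simpa [Function.comp_def] using this
    have htot := hsum.add hlin
    have heq : F t = (∑ i, (-β * (v * (w + (t:ℂ) * v - y i)⁻¹).re))
        + (v * (starRingEnd ℂ) c).re := by
      rw [hF]
      simp only
      rw [mul_add, Complex.add_re, add_comm]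
      congr 1
      rw [Finset.mul_sum, Finset.mul_sum, Complex.re_sum]
      refine Finset.sum_congr rfl fun i _ => ?_
      have h9 : (y i - (w + (t:ℂ) * v))⁻¹ = -(w + (t:ℂ) * v - y i)⁻¹ := by
        rw [← inv_neg]; ring_nf
      rw [h9]
      have h7 : v * ((β:ℂ) * -(w + (t:ℂ) * v - y i)⁻¹)
          = (β:ℂ) * (-(v * (w + (t:ℂ) * v - y i)⁻¹)) := by ring
      rw [h7, Complex.re_ofReal_mul, Complex.neg_re]
      ring
    rw [heq]
    exact htot
  have hbound : ∀ t ∈ Set.Ico (0:ℝ) 1, ‖F t‖ ≤ ‖v‖ * B := by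
    intro t ht
    have ht' : t ∈ Set.Icc (0:ℝ) 1 := ⟨ht.1, ht.2.le⟩
    calc ‖F t‖ ≤ ‖v * ((starRingEnd ℂ) c
          + (β:ℂ) * ∑ i, (y i - (w + (t:ℂ) * v))⁻¹)‖ := by
          rw [hF]; exact Complex.abs_re_le_norm _
      _ = ‖v‖ * ‖(starRingEnd ℂ) c
          + (β:ℂ) * ∑ i, (y i - (w + (t:ℂ) * v))⁻¹‖ := norm_mul _ _
      _ ≤ ‖v‖ * B := by
          rw [hB]
          exact mul_le_mul_of_nonneg_left
            (pointwise_bound β b hb ℓ₀ hℓ₀ c N y hy _ (hut t ht')) habsv.le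
  have key := norm_image_sub_le_of_norm_deriv_le_segment'
    (fun t ht => (hderiv t ht).hasDerivWithinAt) hbound 1 (Set.right_mem_Icc.mpr zero_le_one)
  have hf1 : f 1 = (∑ i, (-β * Real.log (‖x - y i‖))) + (x * (starRingEnd ℂ) c).re := by
    have hx1 : w + ((1:ℝ):ℂ) * v = x := by rw [hv]; push_cast; ring
    rw [hf]; simp only [hx1]
  have hf0 : f 0 = (∑ i, (-β * Real.log (‖w - y i‖))) + (w * (starRingEnd ℂ) c).re := by
    have hx0 : w + ((0:ℝ):ℂ) * v = w := by push_cast; ring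
    rw [hf]; simp only [hx0]
  rw [div_le_iff₀ habsv]
  have := key
  rw [hf1, hf0, Real.norm_eq_abs] at this
  calc |((∑ i, (-β * Real.log (‖x - y i‖))) + (x * (starRingEnd ℂ) c).re)
      - ((∑ i, (-β * Real.log (‖w - y i‖))) + (w * (starRingEnd ℂ) c).re)|
      ≤ ‖v‖ * B * (1 - 0) := this
    _ = B * ‖v‖ := by ring
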